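/- If three points θ₁, θ₂, θ₃ on the boundary of the unit disk (parametrized by angles in ℝ/ℤ) have pairwise angular distance at least ε > 0, then the Euclidean area of the triangle with vertices e^{2πiθ₁}, e^{2πiθ₂}, e^{2πiθ₃} is bounded below by a positive constant depending only on ε. -/

import Mathlib

open Set Metric Filter Topology MeasureTheory

open Pointwise

open Complex in
private lemma exp_sub_exp (x y : ℝ) :
    Complex.exp (2*y*I) - Complex.exp (2*x*I)
      = Complex.exp ((x+y)*I) * (2*I*(Real.sin (y-x) : ℂ)) := by
  rw [show ((Real.sin (y-x) : ℂ)) = Complex.sin ((y:ℂ)-x) by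
    rw [← Complex.ofReal_sub, Complex.ofReal_sin]]
  rw [Complex.sin]
  have e1 := Complex.exp_add ((x+y)*I) (-((y:ℂ)-x)*I)
  have e2 := Complex.exp_add ((x+y)*I) (((y:ℂ)-x)*I)
  have h2 : ((x:ℂ)+y)*I + (-(y-x)*I) = 2*x*I := by ring
  have h3 : ((x:ℂ)+y)*I + ((y-x)*I) = 2*y*I := by ring
  rw [h2] at e1; rw [h3] at e2
  rw [e1, e2]; ring_nf
  rw [Complex.I_sq]; ring

open Complex in
private lemma conj_mul_im (a b c : ℝ) :
    ((starRingEnd ℂ) (Complex.exp (2*b*I) - Complex.exp (2*a*I))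
      * (Complex.exp (2*c*I) - Complex.exp (2*a*I))).im
    = 4 * Real.sin (b-a) * Real.sin (c-a) * Real.sin (c-b) := by
  rw [exp_sub_exp a b, exp_sub_exp a c]
  have hconj : (starRingEnd ℂ) (Complex.exp (((a:ℂ)+b)*I) * (2*I*(Real.sin (b-a) : ℂ)))
      = Complex.exp (-((a:ℂ)+b)*I) * (-(2*I*(Real.sin (b-a) : ℂ))) := by
    have harg : (starRingEnd ℂ) (((a:ℂ)+b)*I) = -((a:ℂ)+b)*I := by
      simp [Complex.conj_ofReal]; ring
    rw [map_mul, map_mul, map_mul, ← Complex.exp_conj, Complex.conj_ofReal, Complex.conj_I,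
      harg, map_ofNat]
    ring
  rw [hconj]
  have key : Complex.exp (-((a:ℂ)+b)*I) * (-(2*I*(Real.sin (b-a):ℂ)))
      * (Complex.exp (((a:ℂ)+c)*I) * (2*I*(Real.sin (c-a):ℂ)))
      = ((4 * Real.sin (b-a) * Real.sin (c-a) : ℝ) : ℂ) * Complex.exp (((c-b : ℝ):ℂ)*I) := by
    rw [show Complex.exp (((c-b:ℝ):ℂ)*I) = Complex.exp (-((a:ℂ)+b)*I) * Complex.exp (((a:ℂ)+c)*I) by
      rw [← Complex.exp_add]; push_cast; ring_nf]
    push_cast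
    ring_nf
    rw [Complex.I_sq]
    ring
  rw [key]
  simp only [Complex.mul_im, Complex.ofReal_re, Complex.ofReal_im,
    Complex.exp_ofReal_mul_I_im, Complex.exp_ofReal_mul_I_re, zero_mul, add_zero, mul_zero]

private lemma vol_hull_eq (z₁ z₂ z₃ : ℂ) :
    volume (convexHull ℝ ({z₁, z₂, z₃} : Set ℂ))
      = ENNReal.ofReal |(z₂-z₁).re*(z₃-z₁).im - (z₂-z₁).im*(z₃-z₁).re|
          * volume (convexHull ℝ ({0, 1, Complex.I} : Set ℂ)) := by
  set L : ℂ →ₗ[ℝ] ℂ := Complex.basisOneI.constr ℝ ![z₂-z₁, z₃-z₁] with hLdef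
  have hb0 : Complex.basisOneI 0 = 1 := by simp [Complex.coe_basisOneI]
  have hb1 : Complex.basisOneI 1 = Complex.I := by simp [Complex.coe_basisOneI]
  have hL1 : L 1 = z₂-z₁ := by
    have h := Complex.basisOneI.constr_basis ℝ ![z₂-z₁, z₃-z₁] 0
    rw [hb0] at h; rw [h]; rfl
  have hLI : L Complex.I = z₃-z₁ := by
    have h := Complex.basisOneI.constr_basis ℝ ![z₂-z₁, z₃-z₁] 1
    rw [hb1] at h; rw [h]; rfl
  have himg : L '' ({0, 1, Complex.I} : Set ℂ) = {0, z₂-z₁, z₃-z₁} := by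
    simp [Set.image_insert_eq, hL1, hLI]
  have hset : ({z₁, z₂, z₃} : Set ℂ) = z₁ +ᵥ ({0, z₂-z₁, z₃-z₁} : Set ℂ) := by
    simp only [vadd_set_insert, vadd_set_singleton, vadd_eq_add]
    norm_num
  rw [hset, convexHull_vadd, measure_vadd, ← himg, ← L.image_convexHull,
    Measure.addHaar_image_linearMap]
  congr 2
  rw [← LinearMap.det_toMatrix Complex.basisOneI]
  have hm : LinearMap.toMatrix Complex.basisOneI Complex.basisOneI L
      = !![(z₂-z₁).re, (z₃-z₁).re; (z₂-z₁).im, (z₃-z₁).im] := by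
    ext i j
    fin_cases i <;> fin_cases j <;>
      simp [LinearMap.toMatrix_apply, hb0, hb1, hL1, hLI, Complex.coe_basisOneI_repr]
  rw [hm, Matrix.det_fin_two_of]
  ring_nf

private lemma sin_lb (s : ℝ) : 2 * ‖(s : AddCircle (1:ℝ))‖ ≤ |Real.sin (Real.pi * s)| := by
  have hnorm : ‖(s : AddCircle (1:ℝ))‖ = |s - round s| := by
    rw [AddCircle.norm_eq]; norm_num
  rw [hnorm]
  set r : ℝ := s - round s with hr
  have habs : |r| ≤ 1/2 := abs_sub_round s
  have hsin : |Real.sin (Real.pi * s)| = |Real.sin (Real.pi * r)| := by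
    have : Real.pi * s = Real.pi * r + (round s : ℤ) * Real.pi := by ring
    rw [this, Real.sin_add_int_mul_pi, abs_mul]
    have hone : |((-1:ℝ)) ^ (round s)| = 1 := by
      rcases Int.even_or_odd (round s) with h | h
      · rw [h.neg_one_zpow, abs_one]
      · rw [h.neg_one_zpow, abs_neg, abs_one]
    rw [hone, one_mul]
  rw [hsin]
  have h0 : |Real.sin (Real.pi * r)| = |Real.sin (Real.pi * |r|)| := by
    rcases abs_cases r with ⟨h, _⟩ | ⟨h, _⟩ <;> rw [h]
    simp [mul_neg, Real.sin_neg]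
  have h1 : |Real.sin (Real.pi * |r|)| = Real.sin (Real.pi * |r|) := by
    rw [abs_of_nonneg]
    exact Real.sin_nonneg_of_nonneg_of_le_pi (by positivity)
      (by nlinarith [Real.pi_pos, abs_nonneg r])
  rw [h0, h1]
  have hb := Real.mul_le_sin (x := Real.pi * |r|) (by positivity)
    (by nlinarith [Real.pi_pos, abs_nonneg r])
  have hpi := Real.pi_pos
  calc 2 * |r| = 2 / Real.pi * (Real.pi * |r|) := by field_simp
  _ ≤ Real.sin (Real.pi * |r|) := hb

private lemma hull_pos_finite :
    0 < volume (convexHull ℝ ({0, 1, Complex.I} : Set ℂ)) ∧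
    volume (convexHull ℝ ({0, 1, Complex.I} : Set ℂ)) < ⊤ := by
  constructor
  · have hspan : affineSpan ℝ ({0, 1, Complex.I} : Set ℂ) = ⊤ := by
      rw [AffineSubspace.affineSpan_eq_top_iff_vectorSpan_eq_top_of_nonempty ℝ ℂ ℂ
        (by simp : ({0, 1, Complex.I} : Set ℂ).Nonempty)]
      rw [← top_le_iff, ← Complex.basisOneI.span_eq]
      refine Submodule.span_le.2 ?_
      rintro x hx
      rw [Complex.coe_basisOneI] at hx
      obtain ⟨i, rfl⟩ := hx
      fin_cases i
      · simpa using vsub_mem_vectorSpan ℝ (show (1:ℂ) ∈ ({0,1,Complex.I}:Set ℂ) by simp)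
          (show (0:ℂ) ∈ ({0,1,Complex.I}:Set ℂ) by simp)
      · simpa using vsub_mem_vectorSpan ℝ (show Complex.I ∈ ({0,1,Complex.I}:Set ℂ) by simp)
          (show (0:ℂ) ∈ ({0,1,Complex.I}:Set ℂ) by simp)
    obtain ⟨x, hx⟩ := interior_convexHull_nonempty_iff_affineSpan_eq_top.2 hspan
    calc (0:ENNReal) < volume (interior (convexHull ℝ ({0, 1, Complex.I} : Set ℂ))) :=
          isOpen_interior.measure_pos volume ⟨x, hx⟩
    _ ≤ _ := measure_mono interior_subset
  · exact (Set.Finite.isCompact_convexHull ℝ (by simp)).measure_lt_top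

/-- If three points on the unit circle, given by angles `θ₁, θ₂, θ₃` (in turns), have
pairwise angular distance at least `ε > 0` in `ℝ/ℤ`, then the Euclidean area of the
triangle with vertices `e^{2πiθ₁}, e^{2πiθ₂}, e^{2πiθ₃}` is bounded below by a positive
constant depending only on `ε`. -/
theorem triangle_area_lower_bound (ε : ℝ) (hε : 0 < ε) :
    ∃ c : ℝ, 0 < c ∧ ∀ θ₁ θ₂ θ₃ : ℝ,
      ε ≤ dist (θ₁ : AddCircle (1 : ℝ)) (θ₂ : AddCircle (1 : ℝ)) →
      ε ≤ dist (θ₂ : AddCircle (1 : ℝ)) (θ₃ : AddCircle (1 : ℝ)) →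
      ε ≤ dist (θ₁ : AddCircle (1 : ℝ)) (θ₃ : AddCircle (1 : ℝ)) →
      ENNReal.ofReal c ≤
        volume (convexHull ℝ
          ({Complex.exp (2 * Real.pi * θ₁ * Complex.I),
            Complex.exp (2 * Real.pi * θ₂ * Complex.I),
            Complex.exp (2 * Real.pi * θ₃ * Complex.I)} : Set ℂ)) := by
  obtain ⟨hTpos, hTtop⟩ := hull_pos_finite
  set T := volume (convexHull ℝ ({0, 1, Complex.I} : Set ℂ)) with hT
  have hTr : 0 < T.toReal := ENNReal.toReal_pos hTpos.ne' hTtop.ne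
  set ε' : ℝ := min ε 4⁻¹ with hε'def
  have hε'pos : 0 < ε' := lt_min hε (by norm_num)
  refine ⟨32 * ε'^3 * T.toReal, by positivity, ?_⟩
  intro θ₁ θ₂ θ₃ h12 h23 h13
  have earg : ∀ θ : ℝ, (2 * (Real.pi:ℂ) * (θ:ℂ) * Complex.I)
      = 2 * ((Real.pi * θ : ℝ):ℂ) * Complex.I := by
    intro θ; push_cast; ring
  rw [earg θ₁, earg θ₂, earg θ₃, vol_hull_eq]
  set z₁ := Complex.exp (2 * ((Real.pi * θ₁ : ℝ):ℂ) * Complex.I)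
  set z₂ := Complex.exp (2 * ((Real.pi * θ₂ : ℝ):ℂ) * Complex.I)
  set z₃ := Complex.exp (2 * ((Real.pi * θ₃ : ℝ):ℂ) * Complex.I)
  have hdet : (z₂-z₁).re*(z₃-z₁).im - (z₂-z₁).im*(z₃-z₁).re
      = ((starRingEnd ℂ) (z₂-z₁) * (z₃-z₁)).im := by
    simp [Complex.mul_im]
    ring
  have hval := conj_mul_im (Real.pi*θ₁) (Real.pi*θ₂) (Real.pi*θ₃)
  rw [hdet, hval]
  -- lower bounds on the sines
  have hbound : ∀ a b : ℝ, ε ≤ dist (a : AddCircle (1 : ℝ)) (b : AddCircle (1 : ℝ)) →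
      2 * ε' ≤ |Real.sin (Real.pi * b - Real.pi * a)| := by
    intro a b hab
    have h1 : Real.pi * b - Real.pi * a = Real.pi * (b - a) := by ring
    rw [h1]
    refine le_trans ?_ (sin_lb (b - a))
    have h2 : ‖((b - a : ℝ) : AddCircle (1:ℝ))‖ = dist (a : AddCircle (1 : ℝ)) (b : AddCircle (1 : ℝ)) := by
      rw [dist_eq_norm, ← norm_neg, ← AddCircle.coe_neg, neg_sub, AddCircle.coe_sub]
    rw [h2]
    have : ε' ≤ dist (a : AddCircle (1 : ℝ)) (b : AddCircle (1 : ℝ)) :=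
      le_trans (min_le_left _ _) hab
    linarith
  have hs12 := hbound θ₁ θ₂ h12
  have hs13 := hbound θ₁ θ₃ h13
  have hs23 := hbound θ₂ θ₃ h23
  have habs : 32 * ε'^3 ≤
      |4 * Real.sin (Real.pi*θ₂ - Real.pi*θ₁) * Real.sin (Real.pi*θ₃ - Real.pi*θ₁)
        * Real.sin (Real.pi*θ₃ - Real.pi*θ₂)| := by
    rw [abs_mul, abs_mul, abs_mul]
    have h4 : |(4:ℝ)| = 4 := by norm_num
    rw [h4]
    calc 32 * ε'^3 = 4 * (2*ε') * (2*ε') * (2*ε') := by ring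
    _ ≤ 4 * |Real.sin (Real.pi*θ₂ - Real.pi*θ₁)| * |Real.sin (Real.pi*θ₃ - Real.pi*θ₁)|
        * |Real.sin (Real.pi*θ₃ - Real.pi*θ₂)| := by
      gcongr
  calc ENNReal.ofReal (32 * ε'^3 * T.toReal)
      = ENNReal.ofReal (32 * ε'^3) * ENNReal.ofReal T.toReal := by
        rw [ENNReal.ofReal_mul (by positivity)]
  _ = ENNReal.ofReal (32 * ε'^3) * T := by rw [ENNReal.ofReal_toReal hTtop.ne]
  _ ≤ ENNReal.ofReal |4 * Real.sin (Real.pi*θ₂ - Real.pi*θ₁) * Real.sin (Real.pi*θ₃ - Real.pi*θ₁)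
        * Real.sin (Real.pi*θ₃ - Real.pi*θ₂)| * T :=
      mul_le_mul_left (ENNReal.ofReal_le_ofReal habs) T
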